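/- For every experiment (S, p_L, p_H), prior ρ ∈ (0,1), reservation value c ∈ (0,1), and integer n ≥ 1, there exists an equilibrium strategy: a function σ* : S → [0,1] such that, with ψ* = Ψ(σ*), for every s ∈ S, Q_{ψ*}(s) > c implies σ*(s) = 1 and Q_{ψ*}(s) < c implies σ*(s) = 0. -/

import Mathlib

open Finset Filter Topology

noncomputable section

/-- Probability that a single buyer rejects the seller, given conditional signal
distribution `p` and strategy `σ`: `r_θ(σ) = 1 - Σ_s p_θ(s)·σ(s)`. -/
def rej {m : ℕ} (p σ : Fin m → ℝ) : ℝ := 1 - ∑ s, p s * σ s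

/-- `ν_θ(σ) = (1/n)·Σ_{k=0}^{n-1} r_θ(σ)^k`: probability of being visited. -/
def visit (n : ℕ) {m : ℕ} (p σ : Fin m → ℝ) : ℝ :=
  (1 / (n : ℝ)) * ∑ k ∈ Finset.range n, rej p σ ^ k

/-- Interim belief `Ψ(σ) = ρ·ν_H(σ) / (ρ·ν_H(σ) + (1-ρ)·ν_L(σ))`. -/
def interim (ρ : ℝ) (n : ℕ) {m : ℕ} (pL pH σ : Fin m → ℝ) : ℝ :=
  ρ * visit n pH σ / (ρ * visit n pH σ + (1 - ρ) * visit n pL σ)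

/-- Posterior belief `Q_ψ(s) = ψ·p_H(s) / (ψ·p_H(s) + (1-ψ)·p_L(s))`. -/
def post {m : ℕ} (ψ : ℝ) (pL pH : Fin m → ℝ) (s : Fin m) : ℝ :=
  ψ * pH s / (ψ * pH s + (1 - ψ) * pL s)

/-- A strategy maps each signal to an acceptance probability in `[0,1]`. -/
def IsStrategy {m : ℕ} (σ : Fin m → ℝ) : Prop := ∀ s, 0 ≤ σ s ∧ σ s ≤ 1

/-- `σ` is an equilibrium strategy: with `ψ* = Ψ(σ)`, accept for sure when the
posterior exceeds `c`, reject for sure when it falls below `c`. -/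
def IsEquilibrium (ρ c : ℝ) (n : ℕ) {m : ℕ} (pL pH σ : Fin m → ℝ) : Prop :=
  IsStrategy σ ∧
  ∀ s : Fin m,
    (c < post (interim ρ n pL pH σ) pL pH s → σ s = 1) ∧
    (post (interim ρ n pL pH σ) pL pH s < c → σ s = 0)

/-- Total surplus `Π(σ) = (1-c)·ρ·(1-r_H(σ)^n) - c·(1-ρ)·(1-r_L(σ)^n)`. -/
def surplus (ρ c : ℝ) (n : ℕ) {m : ℕ} (pL pH σ : Fin m → ℝ) : ℝ :=
  (1 - c) * ρ * (1 - rej pH σ ^ n) - c * (1 - ρ) * (1 - rej pL σ ^ n)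

/-- The most selective equilibrium strategy. -/
def MostSelective (ρ c : ℝ) (n : ℕ) {m : ℕ} (pL pH σ : Fin m → ℝ) : Prop :=
  IsEquilibrium ρ c n pL pH σ ∧
  ∀ σ' : Fin m → ℝ, IsEquilibrium ρ c n pL pH σ' → ∀ s, σ s ≤ σ' s

/-- The least selective equilibrium strategy. -/
def LeastSelective (ρ c : ℝ) (n : ℕ) {m : ℕ} (pL pH σ : Fin m → ℝ) : Prop :=
  IsEquilibrium ρ c n pL pH σ ∧
  ∀ σ' : Fin m → ℝ, IsEquilibrium ρ c n pL pH σ' → ∀ s, σ' s ≤ σ s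

/-- An experiment: `p_L, p_H` are probability mass functions with full joint support,
indexed so that likelihood ratios are nondecreasing. -/
def IsExperiment {m : ℕ} (pL pH : Fin m → ℝ) : Prop :=
  (∀ s, 0 ≤ pL s) ∧ (∀ s, 0 ≤ pH s) ∧
  (∑ s, pL s = 1) ∧ (∑ s, pH s = 1) ∧
  (∀ s, 0 < pL s + pH s) ∧
  (∀ i j : Fin m, i ≤ j → pH i * pL j ≤ pH j * pL i)

/-- A strategy is monotone: a positive acceptance probability at `s_i` forces sure
acceptance at every signal with strictly higher likelihood ratio. -/
def MonotoneStrategy {m : ℕ} (pL pH σ : Fin m → ℝ) : Prop :=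
  ∀ i j : Fin m, 0 < σ i → pH i * pL j < pH j * pL i → σ j = 1

/-- an equilibrium strategy exists for every experiment, prior, reservation
value, and number of buyers. -/
theorem equilibrium_exists
    (ρ c : ℝ) (hρ : ρ ∈ Set.Ioo (0:ℝ) 1) (hc : c ∈ Set.Ioo (0:ℝ) 1)
    (n : ℕ) (hn : 1 ≤ n) (m : ℕ) (hm : 1 ≤ m)
    (pL pH : Fin m → ℝ) (hE : IsExperiment pL pH) :
    ∃ σ : Fin m → ℝ, IsEquilibrium ρ c n pL pH σ := by
  classical
  obtain ⟨hρ0, hρ1⟩ := hρ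
  obtain ⟨hc0, hc1⟩ := hc
  obtain ⟨hL0, hH0, hLsum, hHsum, hjoint, hMLR⟩ := hE
  -- parametric family of threshold strategies
  set σf : ℝ → Fin m → ℝ := fun t i => min 1 (max 0 (t - ((m : ℝ) - 1 - (i : ℕ)))) with hσf
  have hσ01 : ∀ t, IsStrategy (σf t) := by
    intro t s
    exact ⟨le_min zero_le_one (le_max_left _ _), min_le_left _ _⟩
  have hrej0 : ∀ (p : Fin m → ℝ), (∀ s, 0 ≤ p s) → (∑ s, p s) = 1 →
      ∀ t, 0 ≤ rej p (σf t) := by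
    intro p hp hps t
    have h1 : ∑ s, p s * σf t s ≤ ∑ s, p s :=
      Finset.sum_le_sum fun i _ => mul_le_of_le_one_right (hp i) (hσ01 t i).2
    rw [hps] at h1
    simp only [rej]
    linarith
  have hvis : ∀ (p : Fin m → ℝ), (∀ s, 0 ≤ p s) → (∑ s, p s) = 1 →
      ∀ t, 0 < visit n p (σf t) := by
    intro p hp hps t
    have h0 : (1:ℝ) ≤ ∑ k ∈ Finset.range n, rej p (σf t) ^ k := by
      have := Finset.single_le_sum (f := fun k => rej p (σf t) ^ k)
        (fun k _ => pow_nonneg (hrej0 p hp hps t) k)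
        (Finset.mem_range.2 (by omega : 0 < n))
      simpa using this
    have hnR : (0:ℝ) < (n:ℝ) := by exact_mod_cast Nat.lt_of_lt_of_le Nat.zero_lt_one hn
    have hn' : (0:ℝ) < 1 / (n:ℝ) := by positivity
    simp only [visit]
    nlinarith
  have hden : ∀ t, 0 < ρ * visit n pH (σf t) + (1 - ρ) * visit n pL (σf t) := by
    intro t
    have h1 := mul_pos hρ0 (hvis pH hH0 hHsum t)
    have h2 := mul_pos (by linarith : (0:ℝ) < 1 - ρ) (hvis pL hL0 hLsum t)
    linarith
  set g : ℝ → ℝ := fun t => interim ρ n pL pH (σf t) with hg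
  have hg0 : ∀ t, 0 < g t := fun t =>
    div_pos (mul_pos hρ0 (hvis pH hH0 hHsum t)) (hden t)
  have hg1 : ∀ t, g t < 1 := by
    intro t
    have h2 := mul_pos (by linarith : (0:ℝ) < 1 - ρ) (hvis pL hL0 hLsum t)
    simp only [hg, interim]
    rw [div_lt_one (hden t)]
    linarith
  have hQden : ∀ t s, 0 < g t * pH s + (1 - g t) * pL s := by
    intro t s
    rcases lt_or_ge 0 (pH s) with h | h
    · have h1 := mul_pos (hg0 t) h
      have h2 : 0 ≤ (1 - g t) * pL s := mul_nonneg (by linarith [hg1 t]) (hL0 s)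
      linarith
    · have hpH : pH s = 0 := le_antisymm h (hH0 s)
      have hpL : 0 < pL s := by have := hjoint s; linarith
      have h1 := mul_pos (by linarith [hg1 t] : (0:ℝ) < 1 - g t) hpL
      have h2 : g t * pH s = 0 := by rw [hpH, mul_zero]
      linarith
  have hσcont : ∀ i : Fin m, Continuous fun t => σf t i := by
    intro i
    simp only [hσf]
    exact continuous_const.min (continuous_const.max (continuous_id.sub continuous_const))
  have hrejcont : ∀ p : Fin m → ℝ, Continuous fun t => rej p (σf t) := by
    intro p
    simp only [rej]
    exact continuous_const.sub
      (continuous_finset_sum _ fun i _ => continuous_const.mul (hσcont i))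
  have hviscont : ∀ p : Fin m → ℝ, Continuous fun t => visit n p (σf t) := by
    intro p
    simp only [visit]
    exact continuous_const.mul (continuous_finset_sum _ fun k _ => (hrejcont p).pow k)
  have hgcont : Continuous g := by
    simp only [hg, interim]
    exact (continuous_const.mul (hviscont pH)).div
      ((continuous_const.mul (hviscont pH)).add (continuous_const.mul (hviscont pL)))
      fun t => (hden t).ne'
  set Q : ℝ → Fin m → ℝ := fun t s => post (g t) pL pH s with hQ
  have hQcont : ∀ s, Continuous fun t => Q t s := by
    intro s
    simp only [hQ, post]
    exact (hgcont.mul continuous_const).div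
      ((hgcont.mul continuous_const).add ((continuous_const.sub hgcont).mul continuous_const))
      fun t => (hQden t s).ne'
  have hQmono : ∀ t, ∀ i j : Fin m, i ≤ j → Q t i ≤ Q t j := by
    intro t i j hij
    simp only [hQ, post]
    rw [div_le_div_iff₀ (hQden t i) (hQden t j)]
    have key : g t * (1 - g t) * (pH i * pL j) ≤ g t * (1 - g t) * (pH j * pL i) :=
      mul_le_mul_of_nonneg_left (hMLR i j hij)
        (mul_nonneg (hg0 t).le (by linarith [hg1 t]))
    nlinarith [key]
  set a : ℝ → ℕ := fun t => (Finset.univ.filter (fun s => c < Q t s)).card with ha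
  set b : ℝ → ℕ := fun t => (Finset.univ.filter (fun s => c ≤ Q t s)).card with hb
  have ham : ∀ t, a t ≤ m := fun t => le_trans (Finset.card_filter_le _ _) (by simp)
  have hab : ∀ t, a t ≤ b t := fun t =>
    Finset.card_le_card (Finset.monotone_filter_right _ fun s _ hs => le_of_lt hs)
  set S0 : Set ℝ := {t : ℝ | t ≤ (a t : ℝ)} with hS0
  have h0mem : (0:ℝ) ∈ S0 := by
    simp only [hS0, Set.mem_setOf_eq]
    exact Nat.cast_nonneg _
  have hbdd : BddAbove S0 := by
    refine ⟨(m : ℝ), fun t ht => ?_⟩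
    simp only [hS0, Set.mem_setOf_eq] at ht
    calc t ≤ (a t : ℝ) := ht
      _ ≤ (m : ℝ) := by exact_mod_cast ham t
  set T : ℝ := sSup S0 with hT
  have hev : ∀ᶠ t in 𝓝 T, ∀ s : Fin m,
      (Q T s < c → Q t s < c) ∧ (c < Q T s → c < Q t s) := by
    rw [Filter.eventually_all]
    intro s
    have h1 : ∀ᶠ t in 𝓝 T, Q T s < c → Q t s < c := by
      by_cases h : Q T s < c
      · filter_upwards [(hQcont s).continuousAt.eventually_lt continuousAt_const h] with t ht _
        exact ht
      · exact Filter.Eventually.of_forall fun t h' => absurd h' h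
    have h2 : ∀ᶠ t in 𝓝 T, c < Q T s → c < Q t s := by
      by_cases h : c < Q T s
      · filter_upwards [continuousAt_const.eventually_lt (hQcont s).continuousAt h] with t ht _
        exact ht
      · exact Filter.Eventually.of_forall fun t h' => absurd h' h
    exact h1.and h2
  obtain ⟨δ, hδ, hball⟩ := Metric.eventually_nhds_iff.1 hev
  have claim1 : T ≤ (b T : ℝ) := by
    by_contra hcon
    push_neg at hcon
    obtain ⟨t, htS, hlt⟩ := exists_lt_of_lt_csSup ⟨0, h0mem⟩
      (show max ((b T : ℝ)) (T - δ) < T from max_lt hcon (by linarith))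
    have htT : t ≤ T := le_csSup hbdd htS
    have hlt1 : (b T : ℝ) < t := lt_of_le_of_lt (le_max_left _ _) hlt
    have hlt2 : T - δ < t := lt_of_le_of_lt (le_max_right _ _) hlt
    have hdist : dist t T < δ := by
      rw [Real.dist_eq, abs_sub_lt_iff]
      constructor <;> linarith
    have hsub : Finset.univ.filter (fun s => c ≤ Q t s) ⊆
        Finset.univ.filter (fun s => c ≤ Q T s) := by
      intro s hs
      simp only [Finset.mem_filter, Finset.mem_univ, true_and] at hs ⊢
      by_contra hq
      push_neg at hq
      exact absurd hs (not_le.2 ((hball hdist s).1 hq))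
    have hbt : b t ≤ b T := Finset.card_le_card hsub
    simp only [hS0, Set.mem_setOf_eq] at htS
    have h1 : t ≤ (b t : ℝ) := le_trans htS (by exact_mod_cast hab t)
    have h2 : (b t : ℝ) ≤ (b T : ℝ) := by exact_mod_cast hbt
    linarith
  have claim2 : (a T : ℝ) ≤ T := by
    by_contra hcon
    push_neg at hcon
    set t : ℝ := min (T + δ/2) ((a T : ℝ)) with htdef
    have htT : T < t := lt_min (by linarith) hcon
    have hdist : dist t T < δ := by
      have h1 : t ≤ T + δ/2 := min_le_left _ _
      rw [Real.dist_eq, abs_sub_lt_iff]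
      constructor <;> linarith
    have hsub : Finset.univ.filter (fun s => c < Q T s) ⊆
        Finset.univ.filter (fun s => c < Q t s) := by
      intro s hs
      simp only [Finset.mem_filter, Finset.mem_univ, true_and] at hs ⊢
      exact (hball hdist s).2 hs
    have hat : a T ≤ a t := Finset.card_le_card hsub
    have htS : t ∈ S0 := by
      simp only [hS0, Set.mem_setOf_eq]
      calc t ≤ (a T : ℝ) := min_le_right _ _
        _ ≤ (a t : ℝ) := by exact_mod_cast hat
    exact absurd (le_csSup hbdd htS) (not_le.2 htT)
  have final1 : ∀ s, c < Q T s → σf T s = 1 := by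
    intro s hs
    have hup : Finset.Ici s ⊆ Finset.univ.filter (fun j => c < Q T j) := by
      intro j hj
      simp only [Finset.mem_filter, Finset.mem_univ, true_and]
      exact lt_of_lt_of_le hs (hQmono T s j (Finset.mem_Ici.1 hj))
    have hcard : m - (s : ℕ) ≤ a T := by
      have h := Finset.card_le_card hup
      rwa [Fin.card_Ici] at h
    have hsm : (s : ℕ) < m := s.isLt
    have hreal : (m : ℝ) - ((s : ℕ) : ℝ) ≤ (a T : ℝ) := by
      have h1 : ((m - (s:ℕ) : ℕ) : ℝ) ≤ (a T : ℝ) := by exact_mod_cast hcard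
      rwa [Nat.cast_sub hsm.le] at h1
    have hTs : (1:ℝ) ≤ T - ((m:ℝ) - 1 - ((s : ℕ) : ℝ)) := by linarith [claim2]
    simp only [hσf]
    rw [max_eq_right (by linarith : (0:ℝ) ≤ T - ((m:ℝ) - 1 - ((s:ℕ):ℝ))), min_eq_left hTs]
  have final2 : ∀ s, Q T s < c → σf T s = 0 := by
    intro s hs
    have hdown : Finset.univ.filter (fun j => c ≤ Q T j) ⊆ Finset.Ioi s := by
      intro j hj
      simp only [Finset.mem_filter, Finset.mem_univ, true_and] at hj
      rw [Finset.mem_Ioi]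
      by_contra hle
      push_neg at hle
      exact absurd hj (not_le.2 (lt_of_le_of_lt (hQmono T j s hle) hs))
    have hcard : b T ≤ m - 1 - (s : ℕ) := by
      have h := Finset.card_le_card hdown
      rwa [Fin.card_Ioi] at h
    have hsm : (s:ℕ) < m := s.isLt
    have hn1 : b T + (s:ℕ) + 1 ≤ m := by omega
    have hrealn : (b T : ℝ) + ((s:ℕ):ℝ) + 1 ≤ (m:ℝ) := by exact_mod_cast hn1
    have hx : T - ((m:ℝ) - 1 - ((s:ℕ):ℝ)) ≤ 0 := by linarith [claim1]
    simp only [hσf]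
    rw [max_eq_left hx, min_eq_right zero_le_one]
  simp only [hQ, hg] at final1 final2
  refine ⟨σf T, ?_⟩
  unfold IsEquilibrium
  exact ⟨hσ01 T, fun s => ⟨final1 s, final2 s⟩⟩
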